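/- Every prime graph with no induced hole (chordless cycle of length ≥ 5) and no induced bull is nearly weakly chordal: for every vertex v, the subgraph induced on A(v) has no induced C_k and no induced complement of C_k for any k ≥ 5. -/

import Mathlib

open SimpleGraph

/-- The dart: vertices a,b,c,d,e = 0,1,2,3,4; edges ab, ac, ad, bd, cd, de. -/
def dartGraph : SimpleGraph (Fin 5) :=
  SimpleGraph.fromEdgeSet {s(0,1), s(0,2), s(0,3), s(1,3), s(2,3), s(3,4)}

/-- The bull: vertices a,b,c,d,e = 0,1,2,3,4; edges ab, bc, cd, be, ce. -/
def bullGraph : SimpleGraph (Fin 5) :=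
  SimpleGraph.fromEdgeSet {s(0,1), s(1,2), s(2,3), s(1,4), s(2,4)}

/-- The house: C4 on v1..v4 = 0..3 plus v5 = 4 adjacent to v2 = 1 and v3 = 2. -/
def houseGraph : SimpleGraph (Fin 5) :=
  SimpleGraph.fromEdgeSet {s(0,1), s(1,2), s(2,3), s(3,0), s(4,1), s(4,2)}

/-- Anti-neighborhood of a vertex: all vertices distinct from and nonadjacent to `v`. -/
def vertexAnti {V : Type*} (G : SimpleGraph V) (v : V) : Set V :=
  {u | u ≠ v ∧ ¬ G.Adj v u}

/-- Anti-neighborhood of a set `S`: vertices outside `S` with no neighbor in `S`. -/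
def antiNbhd {V : Type*} (G : SimpleGraph V) (S : Set V) : Set V :=
  {v | v ∉ S ∧ ∀ u ∈ S, ¬ G.Adj v u}

/-- Contact vertices of `S`: outside `S`, with a neighbor in `S` and a neighbor in `antiNbhd G S`. -/
def contactSet {V : Type*} (G : SimpleGraph V) (S : Set V) : Set V :=
  {v | v ∉ S ∧ (∃ u ∈ S, G.Adj v u) ∧ ∃ w ∈ antiNbhd G S, G.Adj v w}

/-- `G` has a clique cutset: a clique whose removal disconnects the graph. -/
def HasCliqueCutset {V : Type*} (G : SimpleGraph V) : Prop :=
  ∃ C : Set V, G.IsClique C ∧ ¬ (G.induce Cᶜ).Preconnected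

/-- `U` is a module: no outside vertex distinguishes two vertices of `U`. -/
def IsModule {V : Type*} (G : SimpleGraph V) (U : Set V) : Prop :=
  ∀ z ∉ U, (∀ x ∈ U, G.Adj z x) ∨ (∀ x ∈ U, ¬ G.Adj z x)

/-- `G` is prime: all its modules are trivial. -/
def IsPrime {V : Type*} (G : SimpleGraph V) : Prop :=
  ∀ U : Set V, IsModule G U → U = ∅ ∨ (∃ x, U = {x}) ∨ U = Set.univ

/-- `G` is perfect: every induced subgraph has chromatic number equal to clique number. -/
def IsPerfect {V : Type*} (G : SimpleGraph V) : Prop :=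
  ∀ s : Set V, (G.induce s).chromaticNumber = ((G.induce s).cliqueNum : ℕ∞)

/-- Distance from a vertex to a set of vertices. -/
noncomputable def setDist {V : Type*} (G : SimpleGraph V) (v : V) (S : Set V) : ℕ :=
  sInf {n | ∃ u ∈ S, n = G.dist v u}

open scoped Fin.NatCast Fin.CommRing

private lemma fin_natCast_ne {k : ℕ} [NeZero k] {c d : ℕ} (hdc : d < c) (h : c - d < k) :
    (c : Fin k) ≠ (d : Fin k) := by
  intro hh
  have hmod : c % k = d % k := by
    rw [Fin.ext_iff, Fin.val_natCast, Fin.val_natCast] at hh; exact hh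
  have hdvd : k ∣ c - d := (Nat.modEq_iff_dvd' hdc.le).mp hmod.symm
  have := Nat.le_of_dvd (by omega) hdvd
  omega

private lemma fin_add_natCast_ne {k : ℕ} [NeZero k] (i : Fin k) {c d : ℕ} (hdc : d < c)
    (h : c - d < k) : i + (c : Fin k) ≠ i + (d : Fin k) := fun hh =>
  fin_natCast_ne hdc h (add_left_cancel hh)

section Z
variable {V : Type*} {G : SimpleGraph V} {k : ℕ} [NeZero k]

private lemma fin_sub_val_one (hk6 : 6 ≤ k) {a b : Fin k} (h : (a - b).val = 1) :
    a = b + 1 := by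
  have h1 : a - b = 1 := by
    rw [Fin.ext_iff, h, Fin.val_one', Nat.mod_eq_of_lt (show 1 < k by omega)]
  exact (eq_add_of_sub_eq h1).trans (add_comm 1 b)

private lemma z_adj_of_ne (hk6 : 6 ≤ k) (z : Fin k → V)
    (hz : ∀ i j, G.Adj (z i) (z j) ↔ ((cycleGraph k)ᶜ).Adj i j)
    {a b : Fin k} (h1 : a ≠ b) (h2 : a ≠ b + 1) (h3 : b ≠ a + 1) : G.Adj (z a) (z b) := by
  rw [hz, compl_adj, cycleGraph_adj']
  refine ⟨h1, ?_⟩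
  rintro (h | h)
  · exact h2 (fin_sub_val_one hk6 h)
  · exact h3 (fin_sub_val_one hk6 h)

private lemma z_nadj_consec (hk6 : 6 ≤ k) (z : Fin k → V)
    (hz : ∀ i j, G.Adj (z i) (z j) ↔ ((cycleGraph k)ᶜ).Adj i j)
    {a b : Fin k} (h : a = b + 1) : ¬ G.Adj (z a) (z b) := by
  rw [hz, compl_adj, cycleGraph_adj']
  rintro ⟨-, hn⟩
  apply hn
  left
  rw [h, add_sub_cancel_left, Fin.val_one']
  exact Nat.mod_eq_of_lt (by omega)

private lemma zz_adj (hk6 : 6 ≤ k) (z : Fin k → V)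
    (hz : ∀ i j, G.Adj (z i) (z j) ↔ ((cycleGraph k)ᶜ).Adj i j)
    (i : Fin k) {c d : ℕ} (h2 : d + 2 ≤ c) (h3 : c ≤ d + (k - 2)) :
    G.Adj (z (i + (c : Fin k))) (z (i + (d : Fin k))) := by
  apply z_adj_of_ne hk6 z hz
  · exact fin_add_natCast_ne i (by omega) (by omega)
  · have h : i + (d : Fin k) + 1 = i + ((d + 1 : ℕ) : Fin k) := by push_cast; ring
    rw [h]
    exact fin_add_natCast_ne i (by omega) (by omega)
  · have h : i + (c : Fin k) + 1 = i + ((c + 1 : ℕ) : Fin k) := by push_cast; ring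
    rw [h]
    exact (fin_add_natCast_ne i (c := c + 1) (d := d) (by omega) (by omega)).symm

private lemma zz_nadj (hk6 : 6 ≤ k) (z : Fin k → V)
    (hz : ∀ i j, G.Adj (z i) (z j) ↔ ((cycleGraph k)ᶜ).Adj i j)
    (i : Fin k) {c d : ℕ} (h : c = d + 1) :
    ¬ G.Adj (z (i + (c : Fin k))) (z (i + (d : Fin k))) := by
  apply z_nadj_consec hk6 z hz
  subst h; push_cast; ring

private lemma zz_ne (hk6 : 6 ≤ k) {z : Fin k → V} (hzinj : Function.Injective z)
    (i : Fin k) {c d : ℕ} (hdc : d < c) (h : c - d < k) :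
    z (i + (c : Fin k)) ≠ z (i + (d : Fin k)) := fun hh =>
  fin_add_natCast_ne i hdc h (hzinj hh)

private lemma exists_change (hk6 : 6 ≤ k) (P : Fin k → Prop)
    (hp : ∃ i, P i) (hn : ∃ i, ¬ P i) : ∃ j, P j ∧ ¬ P (j + 1) := by
  by_contra hcon
  push_neg at hcon
  obtain ⟨p, hp⟩ := hp
  obtain ⟨q, hq⟩ := hn
  have step : ∀ n : ℕ, P (p + (n : Fin k)) := by
    intro n
    induction n with
    | zero => simpa using hp
    | succ m ih =>
        have h2 := hcon _ ih
        rwa [show p + ((m : ℕ) : Fin k) + 1 = p + (((m + 1 : ℕ)) : Fin k) by push_cast; ring] at h2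
  apply hq
  have h3 := step (q - p).val
  rwa [Fin.cast_val_eq_self, add_sub_cancel] at h3
end Z

private lemma bullGraph_adj_iff (i j : Fin 5) : bullGraph.Adj i j ↔
    (s(i,j) = s(0,1) ∨ s(i,j) = s(1,2) ∨ s(i,j) = s(2,3) ∨ s(i,j) = s(1,4) ∨ s(i,j) = s(2,4))
      ∧ i ≠ j := by
  rw [bullGraph, SimpleGraph.fromEdgeSet_adj]
  simp [Set.mem_insert_iff]

private lemma no_bull {V : Type*} {G : SimpleGraph V} (hbull : IsEmpty (bullGraph ↪g G))
    {a b c d e : V}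
    (hab : G.Adj a b) (hbc : G.Adj b c) (hcd : G.Adj c d) (hbe : G.Adj b e) (hce : G.Adj c e)
    (hac : ¬ G.Adj a c) (had : ¬ G.Adj a d) (hae : ¬ G.Adj a e)
    (hbd : ¬ G.Adj b d) (hde : ¬ G.Adj d e)
    (nac : a ≠ c) (nad : a ≠ d) (nae : a ≠ e) (nbd : b ≠ d) (nde : d ≠ e) : False := by
  have nab : a ≠ b := hab.ne
  have nbc : b ≠ c := hbc.ne
  have ncd : c ≠ d := hcd.ne
  have nbe : b ≠ e := hbe.ne
  have nce : c ≠ e := hce.ne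
  have hba := hab.symm; have hcb := hbc.symm; have hdc := hcd.symm
  have heb := hbe.symm; have hec := hce.symm
  have hca : ¬ G.Adj c a := fun h => hac h.symm
  have hda : ¬ G.Adj d a := fun h => had h.symm
  have hea : ¬ G.Adj e a := fun h => hae h.symm
  have hdb : ¬ G.Adj d b := fun h => hbd h.symm
  have hed : ¬ G.Adj e d := fun h => hde h.symm
  have naa : ¬ G.Adj a a := G.irrefl
  have nbb : ¬ G.Adj b b := G.irrefl
  have ncc : ¬ G.Adj c c := G.irrefl
  have ndd : ¬ G.Adj d d := G.irrefl
  have nee : ¬ G.Adj e e := G.irrefl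
  apply hbull.false
  refine ⟨⟨![a,b,c,d,e], ?_⟩, ?_⟩
  · intro i j hij
    fin_cases i <;> fin_cases j <;> simp_all
  · intro i j
    fin_cases i <;> fin_cases j <;>
      simp only [Matrix.cons_val_zero, Matrix.cons_val_one, Matrix.head_cons,
        Matrix.cons_val_two, Matrix.tail_cons, Matrix.cons_val_three, Matrix.cons_val_four,
        Function.Embedding.coeFn_mk] <;>
      first
        | exact iff_of_true (by assumption) (by rw [bullGraph_adj_iff]; decide)
        | exact iff_of_false (by assumption) (by rw [bullGraph_adj_iff]; decide)

private lemma no_c5 {V : Type*} {G : SimpleGraph V} (h5 : IsEmpty (cycleGraph 5 ↪g G))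
    {a b c d e : V}
    (hab : G.Adj a b) (hbc : G.Adj b c) (hcd : G.Adj c d) (hde : G.Adj d e) (hea : G.Adj e a)
    (hac : ¬ G.Adj a c) (had : ¬ G.Adj a d) (hbd : ¬ G.Adj b d)
    (hbe : ¬ G.Adj b e) (hce : ¬ G.Adj c e)
    (nac : a ≠ c) (nad : a ≠ d) (nbd : b ≠ d) (nbe : b ≠ e) (nce : c ≠ e) : False := by
  have nab : a ≠ b := hab.ne
  have nbc : b ≠ c := hbc.ne
  have ncd : c ≠ d := hcd.ne
  have nde : d ≠ e := hde.ne
  have nae : a ≠ e := hea.ne'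
  have hba := hab.symm; have hcb := hbc.symm; have hdc := hcd.symm
  have hed := hde.symm; have hae' := hea.symm
  have hca : ¬ G.Adj c a := fun h => hac h.symm
  have hda : ¬ G.Adj d a := fun h => had h.symm
  have hdb : ¬ G.Adj d b := fun h => hbd h.symm
  have heb : ¬ G.Adj e b := fun h => hbe h.symm
  have hec : ¬ G.Adj e c := fun h => hce h.symm
  have naa : ¬ G.Adj a a := G.irrefl
  have nbb : ¬ G.Adj b b := G.irrefl
  have ncc : ¬ G.Adj c c := G.irrefl
  have ndd : ¬ G.Adj d d := G.irrefl
  have nee : ¬ G.Adj e e := G.irrefl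
  apply h5.false
  refine ⟨⟨![a,b,c,d,e], ?_⟩, ?_⟩
  · intro i j hij
    fin_cases i <;> fin_cases j <;> simp_all
  · intro i j
    fin_cases i <;> fin_cases j <;>
      simp only [Matrix.cons_val_zero, Matrix.cons_val_one, Matrix.head_cons,
        Matrix.cons_val_two, Matrix.tail_cons, Matrix.cons_val_three, Matrix.cons_val_four,
        Function.Embedding.coeFn_mk] <;>
      first
        | exact iff_of_true (by assumption) (by decide)
        | exact iff_of_false (by assumption) (by decide)

section ConfigLemmas
variable {V : Type*} {G : SimpleGraph V} {k : ℕ}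

private lemma fin_succ_ne {k : ℕ} [NeZero k] (hk1 : 1 < k) (i : Fin k) : i + 1 ≠ i := by
  intro hh
  have h0 : i + (1 : Fin k) = i + 0 := by simpa using hh
  have h1 : (1 : Fin k) = 0 := add_left_cancel h0
  have h2 : (1 : Fin k).val = 0 := by rw [h1]; rfl
  rw [Fin.val_one', Nat.mod_eq_of_lt hk1] at h2
  omega

private lemma lemA (hk6 : 6 ≤ k)
    (hbull : IsEmpty (bullGraph ↪g G)) (h5 : IsEmpty (cycleGraph 5 ↪g G))
    (z : Fin k → V) (hzinj : Function.Injective z)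
    (hz : ∀ i j, G.Adj (z i) (z j) ↔ ((cycleGraph k)ᶜ).Adj i j)
    {b a : V} (hbZ : ∀ i, b ≠ z i) (haZ : ∀ i, a ≠ z i)
    (hbp : ∃ i, G.Adj b (z i)) (hbn : ∃ i, ¬ G.Adj b (z i))
    (han : ∀ i, ¬ G.Adj a (z i)) (hab : G.Adj b a) : False := by
  haveI : NeZero k := ⟨by omega⟩
  obtain ⟨j, hj1, hj2⟩ := exists_change hk6 (fun i => G.Adj b (z i)) hbp hbn
  have bull1 : ∀ j m : Fin k, G.Adj b (z j) → ¬ G.Adj b (z (j + 1)) → G.Adj b (z m) →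
      m ≠ j → m ≠ j + 1 → m ≠ j + 2 → m + 1 ≠ j → False := by
    intro j m hbj hbj1 hbm h1 h2 h3 h4
    exact no_bull hbull hab.symm hbm
      (z_adj_of_ne hk6 z hz h2 (by rw [add_assoc, one_add_one_eq_two]; exact h3)
        (fun hh => h1 (add_right_cancel hh).symm))
      hbj
      (z_adj_of_ne hk6 z hz h1 h2 (Ne.symm h4))
      (han m) (han (j+1)) (han j) hbj1
      (z_nadj_consec hk6 z hz rfl)
      (haZ m) (haZ (j+1)) (haZ j) (hbZ (j+1))
      (fun hh => fin_succ_ne (by omega) j (hzinj hh))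
  by_cases H1 : ∃ m, G.Adj b (z m) ∧ m ≠ j ∧ m ≠ j + 1 ∧ m ≠ j + 2 ∧ m + 1 ≠ j
  · obtain ⟨m, h0, h1, h2, h3, h4⟩ := H1
    exact bull1 j m hj1 hj2 h0 h1 h2 h3 h4
  · have hS : ∀ m, G.Adj b (z m) → m = j ∨ m = j + 1 ∨ m = j + 2 ∨ m + 1 = j := by
      intro m hm; by_contra hcc; push_neg at hcc
      exact H1 ⟨m, hm, hcc.1, hcc.2.1, hcc.2.2.1, hcc.2.2.2⟩
    -- helper to refute small offset equalities
    have hoff : ∀ (i : Fin k) (c d : ℕ), c < d → d - c < k → i + (c:Fin k) ≠ i + (d:Fin k) :=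
      fun i c d h1 h2 => (fin_add_natCast_ne i h1 h2).symm
    by_cases Hj2 : G.Adj b (z (j + 2))
    · have hj3 : ¬ G.Adj b (z (j + 2 + 1)) := by
        intro h
        rcases hS _ h with h' | h' | h' | h'
        · exact fin_add_natCast_ne j (show (0:ℕ) < 3 by omega) (by omega)
            (by push_cast; linear_combination h')
        · exact fin_add_natCast_ne j (show (1:ℕ) < 3 by omega) (by omega)
            (by push_cast; linear_combination h')
        · exact fin_add_natCast_ne j (show (2:ℕ) < 3 by omega) (by omega)
            (by push_cast; linear_combination h')
        · exact fin_add_natCast_ne j (show (0:ℕ) < 4 by omega) (by omega)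
            (by push_cast; linear_combination h')
      apply bull1 (j+2) j Hj2 hj3 hj1
      · intro hh
        exact fin_add_natCast_ne j (show (0:ℕ) < 2 by omega) (by omega)
          (by push_cast; linear_combination -hh)
      · intro hh
        exact fin_add_natCast_ne j (show (0:ℕ) < 3 by omega) (by omega)
          (by push_cast; linear_combination -hh)
      · intro hh
        exact fin_add_natCast_ne j (show (0:ℕ) < 4 by omega) (by omega)
          (by push_cast; linear_combination -hh)
      · intro hh
        exact fin_add_natCast_ne j (show (1:ℕ) < 2 by omega) (by omega)
          (by push_cast; linear_combination -hh)
    · obtain ⟨jj, hjj⟩ : ∃ jj : Fin k, j = jj + ((2:ℕ) : Fin k) := ⟨j - 2, by push_cast; ring⟩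
      have r3 : j + 1 = jj + ((3:ℕ):Fin k) := by rw [hjj]; push_cast; ring
      have r4 : j + 2 = jj + ((4:ℕ):Fin k) := by rw [hjj]; push_cast; ring
      have r1 : j - 1 = jj + ((1:ℕ):Fin k) := by rw [hjj]; push_cast; ring
      have r0 : (jj:Fin k) = jj + ((0:ℕ):Fin k) := by push_cast; ring
      have hb0 : ¬ G.Adj b (z (jj + ((0:ℕ):Fin k))) := by
        rw [← r0]; intro h
        rcases hS _ h with h' | h' | h' | h'
        · rw [hjj] at h'
          exact fin_add_natCast_ne jj (show (0:ℕ) < 2 by omega) (by omega)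
            (by push_cast; linear_combination -h')
        · rw [r3] at h'
          exact fin_add_natCast_ne jj (show (0:ℕ) < 3 by omega) (by omega)
            (by push_cast; linear_combination -h')
        · rw [r4] at h'
          exact fin_add_natCast_ne jj (show (0:ℕ) < 4 by omega) (by omega)
            (by push_cast; linear_combination -h')
        · rw [hjj] at h'
          exact fin_add_natCast_ne jj (show (1:ℕ) < 2 by omega) (by omega)
            (by push_cast; linear_combination -h')
      rw [hjj] at hj1
      rw [r3] at hj2
      rw [r4] at Hj2
      by_cases Hjm1 : G.Adj b (z (j - 1))
      · rw [r1] at Hjm1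
        exact no_c5 h5 Hjm1 (zz_adj hk6 z hz jj (c:=3) (d:=1) (by omega) (by omega)).symm
          (zz_adj hk6 z hz jj (c:=3) (d:=0) (by omega) (by omega))
          (zz_adj hk6 z hz jj (c:=2) (d:=0) (by omega) (by omega)).symm
          hj1.symm
          hj2 hb0
          (zz_nadj hk6 z hz jj (c:=1) (d:=0) rfl)
          (fun h => zz_nadj hk6 z hz jj (c:=2) (d:=1) rfl h.symm)
          (zz_nadj hk6 z hz jj (c:=3) (d:=2) rfl)
          (hbZ _) (hbZ _)
          (zz_ne hk6 hzinj jj (c:=1) (d:=0) (by omega) (by omega))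
          (zz_ne hk6 hzinj jj (c:=2) (d:=1) (by omega) (by omega)).symm
          (zz_ne hk6 hzinj jj (c:=3) (d:=2) (by omega) (by omega))
      · rw [r1] at Hjm1
        exact no_bull hbull hj1
          (zz_adj hk6 z hz jj (c:=4) (d:=2) (by omega) (by omega)).symm
          (zz_adj hk6 z hz jj (c:=4) (d:=1) (by omega) (by omega))
          (zz_adj hk6 z hz jj (c:=2) (d:=0) (by omega) (by omega))
          (zz_adj hk6 z hz jj (c:=4) (d:=0) (by omega) (by omega))
          Hj2 Hjm1 hb0
          (zz_nadj hk6 z hz jj (c:=2) (d:=1) rfl)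
          (zz_nadj hk6 z hz jj (c:=1) (d:=0) rfl)
          (hbZ _) (hbZ _) (hbZ _)
          (zz_ne hk6 hzinj jj (c:=2) (d:=1) (by omega) (by omega))
          (zz_ne hk6 hzinj jj (c:=1) (d:=0) (by omega) (by omega))

private lemma edge_cut (hk6 : 6 ≤ k)
    (z : Fin k → V)
    (hz : ∀ i j, G.Adj (z i) (z j) ↔ ((cycleGraph k)ᶜ).Adj i j)
    {b : V} (hbp : ∃ i, G.Adj b (z i)) (hbn : ∃ i, ¬ G.Adj b (z i)) :
    ∃ i j, G.Adj (z i) (z j) ∧ G.Adj b (z i) ∧ ¬ G.Adj b (z j) := by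
  haveI : NeZero k := ⟨by omega⟩
  obtain ⟨p, hp1, hp2⟩ := exists_change hk6 (fun i => G.Adj b (z i)) hbp hbn
  by_cases h2 : G.Adj b (z (p + 2))
  · by_cases hm1 : G.Adj b (z (p - 1))
    · refine ⟨p - 1, p + 1, ?_, hm1, hp2⟩
      have := zz_adj (G := G) hk6 z hz (p - 1) (c := 2) (d := 0) (by omega) (by omega)
      have e1 : (p - 1) + ((2:ℕ):Fin k) = p + 1 := by push_cast; ring
      have e2 : (p - 1) + ((0:ℕ):Fin k) = p - 1 := by push_cast; ring
      rw [e1, e2] at this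
      exact this.symm
    · refine ⟨p + 2, p - 1, ?_, h2, hm1⟩
      have := zz_adj (G := G) hk6 z hz (p - 1) (c := 3) (d := 0) (by omega) (by omega)
      have e1 : (p - 1) + ((3:ℕ):Fin k) = p + 2 := by push_cast; ring
      have e2 : (p - 1) + ((0:ℕ):Fin k) = p - 1 := by push_cast; ring
      rw [e1, e2] at this
      exact this
  · refine ⟨p, p + 2, ?_, hp1, h2⟩
    have := zz_adj (G := G) hk6 z hz p (c := 2) (d := 0) (by omega) (by omega)
    have e1 : p + ((2:ℕ):Fin k) = p + 2 := by push_cast; ring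
    have e2 : p + ((0:ℕ):Fin k) = p := by push_cast; ring
    rw [e1, e2] at this
    exact this.symm

private lemma lemB (hk6 : 6 ≤ k)
    (hbull : IsEmpty (bullGraph ↪g G)) (h5 : IsEmpty (cycleGraph 5 ↪g G))
    (z : Fin k → V) (hzinj : Function.Injective z)
    (hz : ∀ i j, G.Adj (z i) (z j) ↔ ((cycleGraph k)ᶜ).Adj i j)
    {x a b : V} (hxZ : ∀ i, x ≠ z i) (hxall : ∀ i, G.Adj x (z i))
    (haZ : ∀ i, a ≠ z i) (han : ∀ i, ¬ G.Adj a (z i)) (hxa : G.Adj x a)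
    (hbZ : ∀ i, b ≠ z i) (hbp : ∃ i, G.Adj b (z i)) (hbn : ∃ i, ¬ G.Adj b (z i)) :
    G.Adj x b := by
  by_contra hxb
  have hba : ¬ G.Adj b a := fun h => lemA hk6 hbull h5 z hzinj hz hbZ haZ hbp hbn han h
  obtain ⟨i, j, hzz, hbi, hbj⟩ := edge_cut hk6 z hz hbp hbn
  have nab : a ≠ b := by
    intro h; subst h
    obtain ⟨q, hq⟩ := hbp
    exact han q hq
  have nxb : x ≠ b := by
    intro h; subst h
    obtain ⟨q, hq⟩ := hbn
    exact hq (hxall q)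
  exact no_bull hbull hxa.symm (hxall i) hbi.symm (hxall j) hzz
    (han i) (fun h => hba h.symm) (han j) hxb hbj
    (haZ i) nab (haZ j) nxb (hbZ j)

private lemma lemC (hk6 : 6 ≤ k)
    (hbull : IsEmpty (bullGraph ↪g G)) (h5 : IsEmpty (cycleGraph 5 ↪g G))
    (z : Fin k → V) (hzinj : Function.Injective z)
    (hz : ∀ i j, G.Adj (z i) (z j) ↔ ((cycleGraph k)ᶜ).Adj i j)
    {x a b w : V} (hxZ : ∀ i, x ≠ z i) (hxall : ∀ i, G.Adj x (z i))
    (haZ : ∀ i, a ≠ z i) (han : ∀ i, ¬ G.Adj a (z i)) (hxa : G.Adj x a)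
    (hbZ : ∀ i, b ≠ z i) (hbp : ∃ i, G.Adj b (z i)) (hbn : ∃ i, ¬ G.Adj b (z i))
    (hwZ : ∀ i, w ≠ z i) (hwall : ∀ i, G.Adj w (z i))
    (hwb : ¬ G.Adj w b) (hxw : ¬ G.Adj x w) (nxw : x ≠ w) : False := by
  have hxb : G.Adj x b := lemB hk6 hbull h5 z hzinj hz hxZ hxall haZ han hxa hbZ hbp hbn
  have hwa : ¬ G.Adj w a := fun h =>
    hwb (lemB hk6 hbull h5 z hzinj hz hwZ hwall haZ han h hbZ hbp hbn)
  have hba : ¬ G.Adj b a := fun h => lemA hk6 hbull h5 z hzinj hz hbZ haZ hbp hbn han h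
  obtain ⟨i, hbi⟩ := hbp
  have naw : a ≠ w := by
    intro h; subst h
    exact han i (hwall i)
  have nab : a ≠ b := by
    intro h; subst h
    exact han i hbi
  have nwb : w ≠ b := by
    intro h; subst h
    obtain ⟨q, hq⟩ := hbn
    exact hq (hwall q)
  exact no_bull hbull hxa.symm (hxall i) (hwall i).symm hxb hbi.symm
    (han i) (fun h => hwa h.symm) (fun h => hba h.symm) hxw hwb
    (haZ i) naw nab nxw nwb

private lemma lemD (hk6 : 6 ≤ k)
    (hbull : IsEmpty (bullGraph ↪g G))
    (z : Fin k → V)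
    (hz : ∀ i j, G.Adj (z i) (z j) ↔ ((cycleGraph k)ᶜ).Adj i j)
    {x a u u' : V} (hxZ : ∀ i, x ≠ z i)
    (haZ : ∀ i, a ≠ z i) (han : ∀ i, ¬ G.Adj a (z i)) (hxa : G.Adj x a)
    (huZ : ∀ i, u ≠ z i) (huall : ∀ i, G.Adj u (z i))
    (hu'Z : ∀ i, u' ≠ z i) (hu'all : ∀ i, G.Adj u' (z i))
    (hxu' : G.Adj x u') (huu' : ¬ G.Adj u u') (nuu' : u ≠ u')
    (hau : ¬ G.Adj a u) (hau' : ¬ G.Adj a u')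
    (hxall : ∀ i, G.Adj x (z i))
    (hxu : ¬ G.Adj x u) (nxu : x ≠ u) : False := by
  haveI : NeZero k := ⟨by omega⟩
  have nau : a ≠ u := by
    intro h; subst h
    exact han 0 (huall 0)
  have nau' : a ≠ u' := by
    intro h; subst h
    exact han 0 (hu'all 0)
  exact no_bull hbull hxa.symm (hxall 0) (huall 0).symm hxu' (hu'all 0).symm
    (han 0) hau hau' hxu huu'
    (haZ 0) nau nau' nxu nuu'

end ConfigLemmas



private inductive InY {V : Type*} (G : SimpleGraph V) {k : ℕ} (z : Fin k → V) : V → Prop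
  | base (w b : V) (hwZ : ∀ i, w ≠ z i) (hwall : ∀ i, G.Adj w (z i))
      (hbZ : ∀ i, b ≠ z i) (hbp : ∃ i, G.Adj b (z i)) (hbn : ∃ i, ¬ G.Adj b (z i))
      (hwb : ¬ G.Adj w b) : InY G z w
  | step (w u : V) (hwZ : ∀ i, w ≠ z i) (hwall : ∀ i, G.Adj w (z i))
      (hu : InY G z u) (hwu : ¬ G.Adj w u) (hne : w ≠ u) : InY G z w

section AntiHelpers
variable {V : Type*} {G : SimpleGraph V} {k : ℕ}

private lemma anti_notZ (hk6 : 6 ≤ k) (z : Fin k → V)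
    (hz : ∀ i j, G.Adj (z i) (z j) ↔ ((cycleGraph k)ᶜ).Adj i j)
    {a : V} (han : ∀ i, ¬ G.Adj a (z i)) : ∀ i, a ≠ z i := by
  haveI : NeZero k := ⟨by omega⟩
  intro i h
  subst h
  have h2 := zz_adj (G := G) hk6 z hz i (c := 2) (d := 0) (by omega) (by omega)
  have e2 : i + ((0:ℕ):Fin k) = i := by push_cast; ring
  rw [e2] at h2
  exact han (i + ((2:ℕ):Fin k)) h2.symm

private lemma complete_notZ (hk6 : 6 ≤ k) (z : Fin k → V)
    (hz : ∀ i j, G.Adj (z i) (z j) ↔ ((cycleGraph k)ᶜ).Adj i j)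
    {w : V} (hwall : ∀ i, G.Adj w (z i)) : ∀ i, w ≠ z i := by
  haveI : NeZero k := ⟨by omega⟩
  intro i h
  subst h
  have h2 := zz_nadj (G := G) hk6 z hz i (c := 1) (d := 0) rfl
  have e2 : i + ((0:ℕ):Fin k) = i := by push_cast; ring
  rw [e2] at h2
  exact h2 (hwall (i + ((1:ℕ):Fin k))).symm
end AntiHelpers


theorem stmt11 {V : Type*} [Fintype V] (G : SimpleGraph V)
    (hprime : IsPrime G)
    (hhole : ∀ k : ℕ, 5 ≤ k → IsEmpty (cycleGraph k ↪g G))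
    (hbull : IsEmpty (bullGraph ↪g G))
    (v : V) (k : ℕ) (hk : 5 ≤ k) :
    IsEmpty (cycleGraph k ↪g G.induce (vertexAnti G v)) ∧
      IsEmpty ((cycleGraph k)ᶜ ↪g G.induce (vertexAnti G v)) := by
  have h5 : IsEmpty (cycleGraph 5 ↪g G) := hhole 5 (by omega)
  constructor
  · constructor
    intro f
    exact (hhole k hk).false ((SimpleGraph.Embedding.induce _).comp f)
  · constructor
    intro g
    set z : Fin k → V := fun i => (g i : V) with hzdef
    have hzinj : Function.Injective z := fun i j h => g.injective (Subtype.val_injective h)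
    have hz : ∀ i j, G.Adj (z i) (z j) ↔ ((cycleGraph k)ᶜ).Adj i j := by
      intro i j
      rw [← g.map_adj_iff]
      rfl
    have hvz : ∀ i, z i ≠ v ∧ ¬ G.Adj v (z i) := fun i => (g i).2
    rcases Nat.lt_or_ge k 6 with hk5 | hk6
    · have hk5' : k = 5 := by omega
      subst hk5'
      exact no_c5 h5
        ((hz 0 2).mpr (by decide)) ((hz 2 4).mpr (by decide)) ((hz 4 1).mpr (by decide))
        ((hz 1 3).mpr (by decide)) ((hz 3 0).mpr (by decide))
        (fun h => absurd ((hz 0 4).mp h) (by decide))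
        (fun h => absurd ((hz 0 1).mp h) (by decide))
        (fun h => absurd ((hz 2 1).mp h) (by decide))
        (fun h => absurd ((hz 2 3).mp h) (by decide))
        (fun h => absurd ((hz 4 3).mp h) (by decide))
        (hzinj.ne (by decide)) (hzinj.ne (by decide)) (hzinj.ne (by decide))
        (hzinj.ne (by decide)) (hzinj.ne (by decide))
    · haveI : NeZero k := ⟨by omega⟩
      classical
      set U : Set V := {t | (∃ i, t = z i) ∨
          ((∀ i, t ≠ z i) ∧ (∃ i, G.Adj t (z i)) ∧ (∃ i, ¬ G.Adj t (z i))) ∨ InY G z t}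
        with hU
      have Ycompl : ∀ u, InY G z u → (∀ i, u ≠ z i) ∧ (∀ i, G.Adj u (z i)) := by
        intro u hu
        cases hu with
        | base w b hwZ hwall _ _ _ _ => exact ⟨hwZ, hwall⟩
        | step w u hwZ hwall _ _ _ => exact ⟨hwZ, hwall⟩
      have PY : ∀ u, InY G z u →
          (∀ a, (∀ i, ¬ G.Adj a (z i)) → ¬ G.Adj u a) ∧
          (∀ x a, (∀ i, x ≠ z i) → (∀ i, G.Adj x (z i)) → (∀ i, ¬ G.Adj a (z i)) →
            G.Adj x a → x ≠ u → G.Adj x u) := by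
        intro u hu
        induction hu with
        | base w b hwZ hwall hbZ hbp hbn hwb =>
          constructor
          · intro a hanti h
            exact hwb (lemB hk6 hbull h5 z hzinj hz hwZ hwall
              (anti_notZ hk6 z hz hanti) hanti h hbZ hbp hbn)
          · intro x a hxZ hxall hanti hxa hxw
            by_contra hxwadj
            exact lemC hk6 hbull h5 z hzinj hz hxZ hxall
              (anti_notZ hk6 z hz hanti) hanti hxa hbZ hbp hbn hwZ hwall hwb hxwadj hxw
        | step w u hwZ hwall hu hwu hne ih =>
          obtain ⟨ih1, ih2⟩ := ih
          obtain ⟨huZ, huall⟩ := Ycompl u hu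
          constructor
          · intro a hanti hwa
            exact hwu (ih2 w a hwZ hwall hanti hwa hne)
          · intro x a hxZ hxall hanti hxa hxwne
            by_contra hxw
            have hxu_ne : x ≠ u := by rintro rfl; exact ih1 a hanti hxa
            have hxu : G.Adj x u := ih2 x a hxZ hxall hanti hxa hxu_ne
            have hwa : ¬ G.Adj w a := fun h => hwu (ih2 w a hwZ hwall hanti h hne)
            exact lemD hk6 hbull z hz hxZ (anti_notZ hk6 z hz hanti) hanti hxa
              hwZ hwall huZ huall hxu hwu hne
              (fun h => hwa h.symm) (fun h => ih1 a hanti h.symm) hxall hxw hxwne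
      have hmod : IsModule G U := by
        intro t htU
        by_cases hcomp : ∀ i, G.Adj t (z i)
        · left
          have htZ : ∀ i, t ≠ z i := complete_notZ hk6 z hz hcomp
          have htY : ¬ InY G z t := fun h => htU (Or.inr (Or.inr h))
          intro s hsU
          rcases hsU with ⟨i, rfl⟩ | ⟨hsZ, hsp, hsn⟩ | hsY
          · exact hcomp i
          · by_contra hts
            exact htY (InY.base t s htZ hcomp hsZ hsp hsn hts)
          · by_contra hts
            have hnets : t ≠ s := fun h => htY (h ▸ hsY)
            exact htY (InY.step t s htZ hcomp hsY hts hnets)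
        · right
          have htZ : ∀ i, t ≠ z i := fun i h => htU (Or.inl ⟨i, h⟩)
          have hanti : ∀ i, ¬ G.Adj t (z i) := by
            by_contra hmix
            push_neg at hmix hcomp
            exact htU (Or.inr (Or.inl ⟨htZ, hmix, hcomp⟩))
          intro s hsU
          rcases hsU with ⟨i, rfl⟩ | ⟨hsZ, hsp, hsn⟩ | hsY
          · exact hanti i
          · exact fun h => lemA hk6 hbull h5 z hzinj hz hsZ
              (anti_notZ hk6 z hz hanti) hsp hsn hanti h.symm
          · exact fun h => (PY s hsY).1 t hanti h.symm
      rcases hprime U hmod with hempty | ⟨x0, hx0⟩ | huniv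
      · have hz0 : z 0 ∈ U := Or.inl ⟨0, rfl⟩
        rw [hempty] at hz0
        exact hz0
      · have hz0 : z 0 ∈ U := Or.inl ⟨0, rfl⟩
        have hz1 : z 1 ∈ U := Or.inl ⟨1, rfl⟩
        rw [hx0] at hz0 hz1
        have h01 := hzinj (hz0.trans hz1.symm)
        have hval : (0 : Fin k).val = (1 : Fin k).val := by rw [h01]
        rw [Fin.val_zero, Fin.val_one', Nat.mod_eq_of_lt (by omega)] at hval
        omega
      · have hvU : v ∈ U := by rw [huniv]; trivial
        rcases hvU with ⟨i, hvi⟩ | ⟨hvZ, ⟨i, hvadj⟩, -⟩ | hvY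
        · exact (hvz i).1 hvi.symm
        · exact (hvz i).2 hvadj
        · exact (hvz 0).2 ((Ycompl v hvY).2 0)
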